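/- Let k be a field with char k ≠ 2 and let a, b, c, d ∈ k be nonzero. If there exists a k-linear bijection φ : ℍ[k,a,b] → ℍ[k,c,d] that preserves norm forms, i.e. N_{c,d}(φ(x)) = N_{a,b}(x) for all x, then ℍ[k,a,b] and ℍ[k,c,d] are isomorphic as k-algebras. (A quaternion algebra is completely determined by its quadratic norm form.) -/

import Mathlib

open Quaternion

/-- The norm form of the quaternion algebra `ℍ[k, c₁, c₂]`. -/
def quatNorm {k : Type*} [Field k] {c₁ c₂ : k} (x : ℍ[k, c₁, c₂]) : k :=
  x.re ^ 2 - c₁ * x.imI ^ 2 - c₂ * x.imJ ^ 2 + c₁ * c₂ * x.imK ^ 2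

namespace QuatAux
variable {k : Type*} [Field k] {c₁ c₂ : k}

/-- The polar form of the quaternion norm. -/
def qpolar (x y : ℍ[k, c₁, c₂]) : k :=
  quatNorm (x + y) - quatNorm x - quatNorm y

lemma qpolar_eq (x y : ℍ[k, c₁, c₂]) :
    qpolar x y = 2 * x.re * y.re - 2 * c₁ * x.imI * y.imI - 2 * c₂ * x.imJ * y.imJ
      + 2 * (c₁ * c₂) * x.imK * y.imK := by
  simp only [qpolar, quatNorm, QuaternionAlgebra.re_add, QuaternionAlgebra.imI_add,
    QuaternionAlgebra.imJ_add, QuaternionAlgebra.imK_add]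
  ring

lemma qpolar_comm (x y : ℍ[k, c₁, c₂]) : qpolar x y = qpolar y x := by
  rw [qpolar_eq, qpolar_eq]; ring

lemma qpolar_self (x : ℍ[k, c₁, c₂]) : qpolar x x = 2 * quatNorm x := by
  rw [qpolar_eq, quatNorm]; ring

lemma qpolar_add_left (x y z : ℍ[k, c₁, c₂]) :
    qpolar (x + y) z = qpolar x z + qpolar y z := by
  simp only [qpolar_eq, QuaternionAlgebra.re_add, QuaternionAlgebra.imI_add,
    QuaternionAlgebra.imJ_add, QuaternionAlgebra.imK_add]
  ring

lemma qpolar_smul_left (r : k) (x z : ℍ[k, c₁, c₂]) :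
    qpolar (r • x) z = r * qpolar x z := by
  simp only [qpolar_eq, QuaternionAlgebra.re_smul, QuaternionAlgebra.imI_smul,
    QuaternionAlgebra.imJ_smul, QuaternionAlgebra.imK_smul, smul_eq_mul]
  ring

lemma qpolar_zero_left (z : ℍ[k, c₁, c₂]) : qpolar 0 z = 0 := by
  simp [qpolar_eq]

lemma qpolar_one (x : ℍ[k, c₁, c₂]) : qpolar x 1 = 2 * x.re := by
  simp [qpolar_eq]

lemma quatNorm_sub_smul (x w : ℍ[k, c₁, c₂]) (t : k) :
    quatNorm (x - t • w) = quatNorm x - t * qpolar x w + t ^ 2 * quatNorm w := by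
  simp only [qpolar_eq, quatNorm, QuaternionAlgebra.re_sub, QuaternionAlgebra.imI_sub,
    QuaternionAlgebra.imJ_sub, QuaternionAlgebra.imK_sub, QuaternionAlgebra.re_smul,
    QuaternionAlgebra.imI_smul, QuaternionAlgebra.imJ_smul, QuaternionAlgebra.imK_smul,
    smul_eq_mul]
  ring

/-- Reflection in a vector `w`. -/
def qrefl (w x : ℍ[k, c₁, c₂]) : ℍ[k, c₁, c₂] :=
  x - (qpolar x w / quatNorm w) • w

lemma qrefl_add (w x y : ℍ[k, c₁, c₂]) : qrefl w (x + y) = qrefl w x + qrefl w y := by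
  simp only [qrefl, qpolar_add_left, add_div, add_smul]
  abel

lemma quatNorm_qrefl (w : ℍ[k, c₁, c₂]) (hw : quatNorm w ≠ 0) (x : ℍ[k, c₁, c₂]) :
    quatNorm (qrefl w x) = quatNorm x := by
  rw [qrefl, quatNorm_sub_smul]
  field_simp
  ring

lemma mul_re_comm (x y : ℍ[k, c₁, c₂]) : (x * y).re = (y * x).re := by
  simp only [QuaternionAlgebra.re_mul]; ring

lemma pure_mul_sq (x : ℍ[k, c₁, c₂]) (hx : x.re = 0) :
    x * x = (-quatNorm x) • (1 : ℍ[k, c₁, c₂]) := by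
  ext <;> simp [quatNorm, hx] <;> ring

lemma pure_anticomm (x y : ℍ[k, c₁, c₂]) (hx : x.re = 0) (hy : y.re = 0) :
    x * y + y * x = (-qpolar x y) • (1 : ℍ[k, c₁, c₂]) := by
  rw [qpolar_eq]
  ext <;> simp [hx, hy] <;> ring

lemma quatNorm_sub_add_quatNorm_add (x : ℍ[k, c₁, c₂]) :
    quatNorm (x - 1) + quatNorm (x + 1) = 2 * quatNorm x + 2 := by
  simp only [quatNorm, QuaternionAlgebra.re_sub, QuaternionAlgebra.imI_sub,
    QuaternionAlgebra.imJ_sub, QuaternionAlgebra.imK_sub, QuaternionAlgebra.re_add,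
    QuaternionAlgebra.imI_add, QuaternionAlgebra.imJ_add, QuaternionAlgebra.imK_add,
    QuaternionAlgebra.re_one, QuaternionAlgebra.imI_one, QuaternionAlgebra.imJ_one,
    QuaternionAlgebra.imK_one]
  ring

lemma qpolar_sub_one (x : ℍ[k, c₁, c₂]) :
    qpolar x (x - 1) = quatNorm (x - 1) + quatNorm x - 1 := by
  simp only [qpolar_eq, quatNorm, QuaternionAlgebra.re_sub, QuaternionAlgebra.imI_sub,
    QuaternionAlgebra.imJ_sub, QuaternionAlgebra.imK_sub, QuaternionAlgebra.re_one,
    QuaternionAlgebra.imI_one, QuaternionAlgebra.imJ_one, QuaternionAlgebra.imK_one]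
  ring

lemma qpolar_add_one (x : ℍ[k, c₁, c₂]) :
    qpolar x (x + 1) = quatNorm (x + 1) + quatNorm x - 1 := by
  simp only [qpolar_eq, quatNorm, QuaternionAlgebra.re_add, QuaternionAlgebra.imI_add,
    QuaternionAlgebra.imJ_add, QuaternionAlgebra.imK_add, QuaternionAlgebra.re_one,
    QuaternionAlgebra.imI_one, QuaternionAlgebra.imJ_one, QuaternionAlgebra.imK_one]
  ring

end QuatAux

open QuatAux

/-- over a field of characteristic ≠ 2, a quaternion algebra is completely
determined by its norm form: a norm-preserving linear bijection between two quaternion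
algebras forces them to be isomorphic as `k`-algebras. -/
theorem quaternionAlgebra_det_by_norm (k : Type*) [Field k] (hchar : (2 : k) ≠ 0)
    (a b c d : k) (ha : a ≠ 0) (hb : b ≠ 0) (hc : c ≠ 0) (hd : d ≠ 0)
    (φ : ℍ[k, a, b] ≃ₗ[k] ℍ[k, c, d])
    (hφ : ∀ x : ℍ[k, a, b], quatNorm (φ x) = quatNorm x) :
    Nonempty (ℍ[k, a, b] ≃ₐ[k] ℍ[k, c, d]) := by
  have hN1 : quatNorm (1 : ℍ[k, c, d]) = 1 := by simp [quatNorm]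
  have hN1' : quatNorm (1 : ℍ[k, a, b]) = 1 := by simp [quatNorm]
  set u : ℍ[k, c, d] := φ 1 with hu
  have hNu : quatNorm u = 1 := by rw [hφ 1, hN1']
  -- construct an additive norm-preserving map sending 1 to 1
  obtain ⟨Φ, hΦadd, hΦnorm, hΦone⟩ :
      ∃ Φ : ℍ[k, a, b] → ℍ[k, c, d],
        (∀ x y, Φ (x + y) = Φ x + Φ y) ∧ (∀ x, quatNorm (Φ x) = quatNorm x) ∧ Φ 1 = 1 := by
    by_cases h : quatNorm (u - 1) = 0
    · -- reflect in u + 1, then in 1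
      have h4 : quatNorm (u + 1) = 4 := by
        have h0 := quatNorm_sub_add_quatNorm_add u
        rw [h, hNu] at h0
        linear_combination h0
      have h4' : quatNorm (u + 1) ≠ 0 := by
        rw [h4]
        intro h0
        apply hchar
        have : (4 : k) = 2 * 2 := by norm_num
        rw [this] at h0
        exact (mul_self_eq_zero.mp h0)
      refine ⟨fun x => qrefl 1 (qrefl (u + 1) (φ x)), fun x y => ?_, fun x => ?_, ?_⟩
      · dsimp only
        rw [map_add, qrefl_add, qrefl_add]
      · dsimp only
        rw [quatNorm_qrefl _ (by rw [hN1]; exact one_ne_zero),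
          quatNorm_qrefl _ h4', hφ]
      · have hp : qpolar u (u + 1) = quatNorm (u + 1) := by
          rw [qpolar_add_one, hNu]; ring
        have h1 : qrefl (u + 1) u = -1 := by
          rw [qrefl, hp, div_self h4', one_smul]
          abel
        show qrefl 1 (qrefl (u + 1) (φ 1)) = 1
        rw [← hu, h1]
        have hp2 : qpolar (-1 : ℍ[k, c, d]) 1 = -2 := by
          simp [qpolar_eq]
        rw [qrefl, hp2, hN1]
        ext <;> simp <;> norm_num
    · -- reflect in u - 1
      refine ⟨fun x => qrefl (u - 1) (φ x), fun x y => ?_, fun x => ?_, ?_⟩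
      · dsimp only
        rw [map_add, qrefl_add]
      · dsimp only
        rw [quatNorm_qrefl _ h, hφ]
      · have hp : qpolar u (u - 1) = quatNorm (u - 1) := by
          rw [qpolar_sub_one, hNu]; ring
        show qrefl (u - 1) (φ 1) = 1
        rw [← hu, qrefl, hp, div_self h, one_smul, sub_sub_cancel]
  have hpol : ∀ x y, qpolar (Φ x) (Φ y) = qpolar x y := by
    intro x y
    simp only [qpolar, ← hΦadd, hΦnorm]
  have hre : ∀ x, (Φ x).re = x.re := by
    intro x
    have h := hpol x 1
    rw [hΦone, qpolar_one, qpolar_one] at h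
    exact mul_left_cancel₀ hchar h
  set i1 : ℍ[k, c, d] := Φ ⟨0, 1, 0, 0⟩ with hi1
  set j1 : ℍ[k, c, d] := Φ ⟨0, 0, 1, 0⟩ with hj1
  have hi1re : i1.re = 0 := by rw [hi1, hre]
  have hj1re : j1.re = 0 := by rw [hj1, hre]
  have hNi1 : quatNorm i1 = -a := by
    rw [hi1, hΦnorm]; simp [quatNorm]
  have hNj1 : quatNorm j1 = -b := by
    rw [hj1, hΦnorm]; simp [quatNorm]
  have hij0 : qpolar i1 j1 = 0 := by
    rw [hi1, hj1, hpol]; simp [qpolar_eq]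
  have hji0 : qpolar j1 i1 = 0 := by rw [qpolar_comm]; exact hij0
  have hii : i1 * i1 = a • (1 : ℍ[k, c, d]) := by
    rw [pure_mul_sq _ hi1re, hNi1, neg_neg]
  have hjj : j1 * j1 = b • (1 : ℍ[k, c, d]) := by
    rw [pure_mul_sq _ hj1re, hNj1, neg_neg]
  have hanti : i1 * j1 + j1 * i1 = 0 := by
    rw [pure_anticomm _ _ hi1re hj1re, hij0, neg_zero, zero_smul]
  have hji : j1 * i1 = -(i1 * j1) := by
    have h0 : j1 * i1 + i1 * j1 = 0 := by rw [add_comm]; exact hanti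
    linear_combination (norm := module) h0
  -- the k element
  set k1 : ℍ[k, c, d] := i1 * j1 with hk1
  have hk1re : k1.re = 0 := by
    have h0 : (i1 * j1).re + (j1 * i1).re = 0 := by
      have := congrArg QuaternionAlgebra.re hanti
      rw [QuaternionAlgebra.re_add] at this; exact this
    rw [mul_re_comm j1 i1] at h0
    have h2 : (2 : k) * (i1 * j1).re = 0 := by rw [two_mul]; exact h0
    exact (mul_eq_zero.mp h2).resolve_left hchar
  have hki : k1 * i1 + i1 * k1 = 0 := by
    rw [hk1, mul_assoc, hji, mul_neg, neg_add_cancel]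
  have hkj : k1 * j1 + j1 * k1 = 0 := by
    rw [hk1, mul_assoc i1 j1 j1, hjj, ← mul_assoc j1 i1 j1, hji, neg_mul,
      mul_assoc i1 j1 j1, hjj, add_neg_cancel]
  have hkk : k1 * k1 = (-(a * b)) • (1 : ℍ[k, c, d]) := by
    rw [hk1, mul_assoc i1 j1 (i1 * j1), ← mul_assoc j1 i1 j1, hji, neg_mul, mul_neg,
      mul_assoc i1 j1 j1, hjj, mul_smul_comm, mul_one, mul_smul_comm, hii, smul_smul,
      neg_smul, mul_comm b a]
  have hNk1 : quatNorm k1 = a * b := by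
    have h0 := pure_mul_sq k1 hk1re
    rw [hkk] at h0
    have := congrArg QuaternionAlgebra.re h0
    simp only [QuaternionAlgebra.re_smul, QuaternionAlgebra.re_one, smul_eq_mul, mul_one] at this
    linear_combination this
  have hpki : qpolar k1 i1 = 0 := by
    have h0 := pure_anticomm k1 i1 hk1re hi1re
    rw [hki] at h0
    have := congrArg QuaternionAlgebra.re h0.symm
    simpa using this
  have hpkj : qpolar k1 j1 = 0 := by
    have h0 := pure_anticomm k1 j1 hk1re hj1re
    rw [hkj] at h0
    have := congrArg QuaternionAlgebra.re h0.symm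
    simpa using this
  -- the algebra homomorphism
  let q : QuaternionAlgebra.Basis ℍ[k, c, d] a 0 b := ⟨i1, j1, i1 * j1, by rw [hii, zero_smul, add_zero], hjj, rfl,
    by rw [hji, zero_smul, zero_sub]⟩
  let f : ℍ[k, a, b] →ₐ[k] ℍ[k, c, d] := q.liftHom
  have hfapply : ∀ x : ℍ[k, a, b],
      f x = x.re • (1 : ℍ[k, c, d]) + x.imI • i1 + x.imJ • j1 + x.imK • k1 := by
    intro x
    show q.lift x = _
    rw [QuaternionAlgebra.Basis.lift, Algebra.algebraMap_eq_smul_one]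
  have hinj : Function.Injective f := by
    rw [injective_iff_map_eq_zero]
    intro x hx
    rw [hfapply] at hx
    have pair : ∀ w : ℍ[k, c, d],
        x.re * qpolar 1 w + x.imI * qpolar i1 w + x.imJ * qpolar j1 w
          + x.imK * qpolar k1 w = 0 := by
      intro w
      have := congrArg (fun z => qpolar z w) hx
      simpa only [qpolar_add_left, qpolar_smul_left, qpolar_zero_left] using this
    have p1 := pair 1
    rw [qpolar_one, qpolar_one, qpolar_one, qpolar_one, hi1re, hj1re, hk1re,
      QuaternionAlgebra.re_one] at p1
    have hxre : x.re = 0 := by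
      have h0 : x.re * 2 = 0 := by linear_combination p1
      exact (mul_eq_zero.mp h0).resolve_right hchar
    have p2 := pair i1
    rw [qpolar_comm 1 i1, qpolar_one, hi1re, qpolar_self, hNi1, hji0, hpki] at p2
    have hxi : x.imI = 0 := by
      have h0 : x.imI * (2 * -a) = 0 := by linear_combination p2
      rcases mul_eq_zero.mp h0 with h1 | h1
      · exact h1
      · exact absurd h1 (mul_ne_zero hchar (neg_ne_zero.mpr ha))
    have p3 := pair j1
    rw [qpolar_comm 1 j1, qpolar_one, hj1re, qpolar_self, hNj1, hij0, hpkj] at p3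
    have hxj : x.imJ = 0 := by
      have h0 : x.imJ * (2 * -b) = 0 := by linear_combination p3
      rcases mul_eq_zero.mp h0 with h1 | h1
      · exact h1
      · exact absurd h1 (mul_ne_zero hchar (neg_ne_zero.mpr hb))
    have p4 := pair k1
    rw [qpolar_comm 1 k1, qpolar_one, hk1re, qpolar_comm i1 k1, hpki,
      qpolar_comm j1 k1, hpkj, qpolar_self, hNk1] at p4
    have hxk : x.imK = 0 := by
      have h0 : x.imK * (2 * (a * b)) = 0 := by linear_combination p4
      rcases mul_eq_zero.mp h0 with h1 | h1
      · exact h1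
      · exact absurd h1 (mul_ne_zero hchar (mul_ne_zero ha hb))
    ext <;> assumption
  have hsurj : Function.Surjective f := by
    have hdim : Module.finrank k ℍ[k, a, b] = Module.finrank k ℍ[k, c, d] := by
      rw [QuaternionAlgebra.finrank_eq_four, QuaternionAlgebra.finrank_eq_four]
    have h0 := (LinearMap.injective_iff_surjective_of_finrank_eq_finrank
      (f := f.toLinearMap) hdim).mp (by simpa using hinj)
    simpa using h0
  exact ⟨AlgEquiv.ofBijective f ⟨hinj, hsurj⟩⟩
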